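/- arXiv:1604.05509 — 2 statements merged into one kernel-verified Lean document; each statement's English description precedes it below -/
import Mathlib

section
/- Let X be a smooth projective surface over ℂ with χ(O_X) = 1 (e.g. a rational surface), H an ample divisor with K_X·H < 0, and ξ a divisor class with ξ·H = 0 and ξ ≠ 0 in Pic(X). Then ξ² ≤ −2. -/
/-- On a smooth projective surface `X` over `ℂ` with `χ(O_X) = 1`,
`H` ample with `K_X·H < 0`, any nonzero divisor class `ξ` with `ξ·H = 0` has `ξ² ≤ -2`.
The geometric inputs (positivity of `H`-degree of nonzero effective divisors,
Serre duality `h²(ξ) = h⁰(K-ξ)`, Riemann–Roch `χ(ξ)+χ(-ξ) = 2χ(O)+ξ²`, and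
`χ ≤ h⁰ + h²`) are encoded as hypotheses on abstract data. -/
theorem stmt_0 (Pic : Type*) [AddCommGroup Pic] [Module ℤ Pic]
    (inter : Pic →ₗ[ℤ] Pic →ₗ[ℤ] ℤ)
    (h0 h2 : Pic → ℕ) (chi : Pic → ℤ) (K H : Pic)
    (hchiO : chi 0 = 1)
    (hRR : ∀ ξ : Pic, chi ξ + chi (-ξ) = 2 * chi 0 + inter ξ ξ)
    (hchile : ∀ ξ : Pic, chi ξ ≤ (h0 ξ : ℤ) + (h2 ξ : ℤ))
    (hSerre : ∀ ξ : Pic, h2 ξ = h0 (K - ξ))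
    (hEff : ∀ ξ : Pic, ξ ≠ 0 → h0 ξ ≠ 0 → 0 < inter ξ H)
    (hKH : inter K H < 0)
    (ξ : Pic) (hξH : inter ξ H = 0) (hne : ξ ≠ 0) :
    inter ξ ξ ≤ -2 := by
  have key : ∀ η : Pic, inter η H = 0 → η ≠ 0 → chi η ≤ 0 := by
    intro η hηH hηne
    have hh0 : h0 η = 0 := by
      by_contra h
      have := hEff η hηne h
      omega
    have hh2 : h2 η = 0 := by
      rw [hSerre]
      by_contra h
      have hKη : inter (K - η) H = inter K H := by
        simp [map_sub, hηH]
      have hKηne : K - η ≠ 0 := by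
        intro h0'
        rw [h0'] at hKη
        simp at hKη
        omega
      have := hEff (K - η) hKηne h
      omega
    have := hchile η
    rw [hh0, hh2] at this
    simpa using this
  have h1 := key ξ hξH hne
  have h2' := key (-ξ) (by simp [hξH]) (by simpa using hne)
  have := hRR ξ
  rw [hchiO] at this
  omega
end

section
/- Let k ≥ 2 and let (a₁,b₁), …, (a_k,b_k) be pairs of nonnegative integers, each pair nonzero, with Σᵢ aᵢ ≥ 2 and Σᵢ bᵢ ≥ 2. Then 2·Σ_{i<j} (aᵢb_j + a_jbᵢ) ≥ k + 2. -/
open Finset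

lemma key_arith (x y A B : ℕ) (h1 : 2 ≤ x + A) (h2 : 2 ≤ y + B)
    (h3 : x ≠ 0 ∨ y ≠ 0) (h4 : A ≠ 0 ∨ B ≠ 0) : 2 ≤ x * B + y * A := by
  rcases Nat.eq_zero_or_pos x with hx | hx
  · have hy : 1 ≤ y := by omega
    have hA : 2 ≤ A := by omega
    nlinarith
  rcases Nat.eq_zero_or_pos y with hy | hy
  · have hB : 2 ≤ B := by omega
    nlinarith
  rcases Nat.eq_zero_or_pos A with hA | hA
  · have hB : 1 ≤ B := by omega
    have hx2 : 2 ≤ x := by omega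
    nlinarith
  rcases Nat.eq_zero_or_pos B with hB | hB
  · have hy2 : 2 ≤ y := by omega
    nlinarith
  nlinarith

lemma pair_sum (k : ℕ) (f : Fin k → Fin k → ℕ) :
    ∑ i, ∑ j ∈ univ.erase i, f i j
      = ∑ p ∈ univ.filter (fun p : Fin k × Fin k => p.1 < p.2), (f p.1 p.2 + f p.2 p.1) := by
  classical
  have h1 : ∑ i, ∑ j ∈ univ.erase i, f i j
      = ∑ p ∈ univ.filter (fun p : Fin k × Fin k => p.1 ≠ p.2), f p.1 p.2 := by
    rw [Finset.sum_filter, Fintype.sum_prod_type]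
    refine Finset.sum_congr rfl fun i _ => ?_
    rw [← Finset.sum_filter, Finset.filter_ne]
  have h2 : ∑ p ∈ univ.filter (fun p : Fin k × Fin k => p.1 ≠ p.2), f p.1 p.2
      = ∑ p ∈ univ.filter (fun p : Fin k × Fin k => p.1 < p.2), f p.1 p.2
        + ∑ p ∈ univ.filter (fun p : Fin k × Fin k => p.2 < p.1), f p.1 p.2 := by
    rw [Finset.sum_filter, Finset.sum_filter, Finset.sum_filter, ← Finset.sum_add_distrib]
    refine Finset.sum_congr rfl fun p _ => ?_
    rcases lt_trichotomy p.1 p.2 with h | h | h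
    · simp [h, h.ne, asymm h]
    · simp [h]
    · simp [h, h.ne', asymm h]
  have h3 : ∑ p ∈ univ.filter (fun p : Fin k × Fin k => p.2 < p.1), f p.1 p.2
      = ∑ p ∈ univ.filter (fun p : Fin k × Fin k => p.1 < p.2), f p.2 p.1 := by
    apply Finset.sum_nbij' (fun p => Prod.swap p) (fun p => Prod.swap p) <;> simp
  rw [h1, h2, h3, ← Finset.sum_add_distrib]



/-- For `k ≥ 2` pairs `(aᵢ, bᵢ)` of nonnegative integers, each pair
nonzero, with `Σᵢ aᵢ ≥ 2` and `Σᵢ bᵢ ≥ 2`, one has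
`2·Σ_{i<j} (aᵢb_j + a_jbᵢ) ≥ k + 2`. -/
theorem stmt_11 (k : ℕ) (hk : 2 ≤ k) (a b : Fin k → ℕ)
    (hnz : ∀ i, ¬(a i = 0 ∧ b i = 0))
    (ha : 2 ≤ ∑ i, a i) (hb : 2 ≤ ∑ i, b i) :
    k + 2 ≤ 2 * ∑ p ∈ Finset.univ.filter (fun p : Fin k × Fin k => p.1 < p.2),
      (a p.1 * b p.2 + a p.2 * b p.1) := by
  classical
  set A : Fin k → ℕ := fun i => ∑ j ∈ univ.erase i, a j with hA
  set B : Fin k → ℕ := fun i => ∑ j ∈ univ.erase i, b j with hB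
  have key : ∀ i, 2 ≤ a i * B i + b i * A i := by
    intro i
    have hAi : a i + A i = ∑ j, a j := Finset.add_sum_erase _ a (mem_univ i)
    have hBi : b i + B i = ∑ j, b j := Finset.add_sum_erase _ b (mem_univ i)
    have hab : a i ≠ 0 ∨ b i ≠ 0 := by
      by_contra h; push_neg at h; exact hnz i ⟨h.1, h.2⟩
    have hABne : A i ≠ 0 ∨ B i ≠ 0 := by
      obtain ⟨j, hj⟩ : ∃ j : Fin k, j ≠ i := by
        have : Nontrivial (Fin k) := Fin.nontrivial_iff_two_le.2 hk
        exact exists_ne i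
      have hja : a j ≤ A i :=
        Finset.single_le_sum (fun _ _ => Nat.zero_le _) (Finset.mem_erase.2 ⟨hj, mem_univ j⟩)
      have hjb : b j ≤ B i :=
        Finset.single_le_sum (fun _ _ => Nat.zero_le _) (Finset.mem_erase.2 ⟨hj, mem_univ j⟩)
      by_contra h; push_neg at h
      exact hnz j ⟨by omega, by omega⟩
    exact key_arith (a i) (b i) (A i) (B i) (by omega) (by omega) hab hABne
  have expand : ∑ i, (a i * B i + b i * A i)
      = 2 * ∑ p ∈ Finset.univ.filter (fun p : Fin k × Fin k => p.1 < p.2),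
          (a p.1 * b p.2 + a p.2 * b p.1) := by
    have e1 : ∑ i, a i * B i
        = ∑ p ∈ univ.filter (fun p : Fin k × Fin k => p.1 < p.2),
            (a p.1 * b p.2 + a p.2 * b p.1) := by
      rw [← pair_sum k (fun i j => a i * b j)]
      exact Finset.sum_congr rfl fun i _ => (Finset.mul_sum _ _ _)
    have e2 : ∑ i, b i * A i
        = ∑ p ∈ univ.filter (fun p : Fin k × Fin k => p.1 < p.2),
            (a p.1 * b p.2 + a p.2 * b p.1) := by
      calc ∑ i, b i * A i = ∑ i, ∑ j ∈ univ.erase i, b i * a j :=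
            Finset.sum_congr rfl fun i _ => (Finset.mul_sum _ _ _)
        _ = ∑ p ∈ univ.filter (fun p : Fin k × Fin k => p.1 < p.2),
              (b p.1 * a p.2 + b p.2 * a p.1) := pair_sum k _
        _ = _ := Finset.sum_congr rfl fun p _ => by ring
    rw [Finset.sum_add_distrib, e1, e2]; ring
  calc k + 2 ≤ 2 * k := by omega
    _ = ∑ _i : Fin k, 2 := by simp [mul_comm]
    _ ≤ ∑ i, (a i * B i + b i * A i) := Finset.sum_le_sum fun i _ => key i
    _ = _ := expand
end
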